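/- For i = 1,…,N, let f_i : ℝ → ℝ be twice continuously differentiable with h̲ ≤ f_i''(s) ≤ h̄ for all s ∈ ℝ, where 0 < h̲ ≤ h̄, let F : ℝ^N → ℝ^N be the stacked gradient map F(z) = (f_1'(z_1), …, f_N'(z_N)), and let y* be the unique minimizer of f = Σ_{i=1}^N f_i. Let L ∈ ℝ^{N×N} satisfy L𝟙 = 0 and 𝟙ᵀL = 0, and suppose λ₂‖x‖² ≤ xᵀLx for some λ₂ > 0 and all x ∈ ℝ^N with 𝟙ᵀx = 0. Let α, β > 0. If (z*, v*) ∈ ℝ^N × ℝ^N satisfies α·F(z*) + β·L z* + L v* = 0 and L z* = 0, then z* = y*·𝟙. -/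

import Mathlib

open scoped Matrix

/-- Any equilibrium `(z*, v*)` of the optimal signal generator, i.e.
`α F(z*) + β L z* + L v* = 0` and `L z* = 0`, satisfies `z* = y* 𝟙`, where `y*` is the
unique minimizer of `f = ∑ i, f i`, `L 𝟙 = 0`, `𝟙ᵀ L = 0`, and `λ₂‖x‖² ≤ xᵀLx` on
`{x : 𝟙ᵀx = 0}` with `λ₂ > 0`. -/
theorem stmt_3 (N : ℕ) (f : Fin N → ℝ → ℝ) (hl hu : ℝ)
    (hl_pos : 0 < hl) (hlu : hl ≤ hu)
    (hsmooth : ∀ i, ContDiff ℝ 2 (f i))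
    (hbound : ∀ i s, hl ≤ deriv (deriv (f i)) s ∧ deriv (deriv (f i)) s ≤ hu)
    (ystar : ℝ) (hy : ∀ s : ℝ, ∑ i, f i ystar ≤ ∑ i, f i s)
    (L : Matrix (Fin N) (Fin N) ℝ)
    (hL1 : L *ᵥ (fun _ => (1 : ℝ)) = 0)
    (h1L : Matrix.vecMul (fun _ => (1 : ℝ)) L = 0)
    (lam2 : ℝ) (hlam2 : 0 < lam2)
    (hquad : ∀ x : Fin N → ℝ, ∑ i, x i = 0 →
      lam2 * ∑ i, (x i) ^ 2 ≤ x ⬝ᵥ (L *ᵥ x))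
    (α β : ℝ) (hα : 0 < α) (hβ : 0 < β)
    (zstar vstar : Fin N → ℝ)
    (heq : ∀ i, α * deriv (f i) (zstar i) + β * (L *ᵥ zstar) i + (L *ᵥ vstar) i = 0)
    (hz : L *ᵥ zstar = 0) :
    zstar = fun _ => ystar := by
  classical
  rcases Nat.eq_zero_or_pos N with hN | hN
  · subst hN; funext i; exact i.elim0
  have hNe : (Finset.univ : Finset (Fin N)).Nonempty := by
    simpa [Finset.univ_nonempty_iff] using Fin.pos_iff_nonempty.mp hN
  -- differentiability facts
  have hdiff : ∀ i, Differentiable ℝ (f i) :=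
    fun i => (hsmooth i).differentiable (by norm_num)
  have hderivC1 : ∀ i, ContDiff ℝ 1 (deriv (f i)) := by
    intro i
    exact (contDiff_succ_iff_deriv.mp
      (show ContDiff ℝ (1+1) (f i) by exact_mod_cast hsmooth i)).2.2
  have hmono : ∀ i, StrictMono (deriv (f i)) := by
    intro i
    exact strictMono_of_deriv_pos fun s => lt_of_lt_of_le hl_pos (hbound i s).1
  -- Step 1 : zstar is constant
  set c : ℝ := (∑ i, zstar i) / N with hc
  set w : Fin N → ℝ := fun i => zstar i - c with hw
  have hsumw : ∑ i, w i = 0 := by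
    have : (N : ℝ) ≠ 0 := by positivity
    simp only [hw, Finset.sum_sub_distrib, Finset.sum_const, Finset.card_univ,
      Fintype.card_fin, nsmul_eq_mul, hc]
    field_simp
    ring
  have hLw : L *ᵥ w = 0 := by
    have hwe : w = zstar - c • (fun _ => (1:ℝ)) := by
      funext i; simp [hw, mul_comm]
    rw [hwe, Matrix.mulVec_sub, Matrix.mulVec_smul, hz, hL1]
    simp
  have hquad' := hquad w hsumw
  rw [hLw] at hquad'
  simp only [dotProduct_zero] at hquad'
  have hsq : ∑ i, (w i) ^ 2 = 0 := by
    have h1 : ∑ i, (w i) ^ 2 ≤ 0 := by nlinarith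
    have h2 : 0 ≤ ∑ i, (w i) ^ 2 := Finset.sum_nonneg fun i _ => sq_nonneg _
    linarith
  have hconst : ∀ i, zstar i = c := by
    intro i
    have := (Finset.sum_eq_zero_iff_of_nonneg (fun i _ => sq_nonneg (w i))).mp hsq i
      (Finset.mem_univ i)
    have : w i = 0 := by nlinarith [this]
    simpa [hw, sub_eq_zero] using this
  -- Step 2 : ∑ deriv (f i) c = 0
  have hsum0 : ∑ i, deriv (f i) c = 0 := by
    have hsumeq : ∑ i, (α * deriv (f i) (zstar i) + β * (L *ᵥ zstar) i
        + (L *ᵥ vstar) i) = 0 := by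
      simp [heq]
    have hLv : ∑ i, (L *ᵥ vstar) i = 0 := by
      have : (fun _ => (1:ℝ)) ⬝ᵥ (L *ᵥ vstar) = 0 := by
        rw [Matrix.dotProduct_mulVec, h1L]; simp
      simpa [dotProduct] using this
    rw [Finset.sum_add_distrib, Finset.sum_add_distrib, hz] at hsumeq
    simp only [Pi.zero_apply, mul_zero, Finset.sum_const_zero, add_zero, hLv] at hsumeq
    rw [← Finset.mul_sum] at hsumeq
    have : ∑ i, deriv (f i) (zstar i) = 0 := by
      rcases mul_eq_zero.mp (by linarith : α * ∑ i, deriv (f i) (zstar i) = 0) with h | h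
      · linarith
      · exact h
    simpa [hconst] using this
  -- Step 3 : ∑ deriv (f i) ystar = 0
  have hmin : IsLocalMin (fun s => ∑ i, f i s) ystar := Filter.Eventually.of_forall hy
  have hdz := hmin.deriv_eq_zero
  rw [deriv_fun_sum (fun i _ => (hdiff i).differentiableAt)] at hdz
  -- strict monotonicity of the sum
  have hg : StrictMono (fun s => ∑ i, deriv (f i) s) := by
    intro a b hab
    exact Finset.sum_lt_sum_of_nonempty hNe fun i _ => hmono i hab
  have hceq : c = ystar := hg.injective (by rw [hsum0, hdz])
  funext i
  rw [hconst i, hceq]
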